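/- Define a_n = sum over 4-tuples (p,q,r,s) of non-negative integers with p+q+r+s=n of (n!/(p!q!r!s!))^2. Then for all n ≥ 2, n^3 * a_n - 2*(2n-1)*(5n^2 - 5n + 2)*a_{n-1} + 64*(n-1)^3*a_{n-2} = 0. -/

import Mathlib

open Finset Nat

lemma mult4 (p q r s : ℕ) :
    Nat.multinomial Finset.univ ![p, q, r, s]
      = (p + q + r + s).choose (p + q) * ((p + q).choose p * (r + s).choose r) := by
  have hspec := Nat.multinomial_spec (Finset.univ : Finset (Fin 4)) ![p, q, r, s]
  rw [Fin.prod_univ_four, Fin.sum_univ_four] at hspec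
  simp only [Matrix.cons_val_zero, Matrix.cons_val_one, Matrix.head_cons,
    Matrix.cons_val_two, Matrix.tail_cons, Matrix.cons_val_three] at hspec
  have hpos : 0 < p ! * q ! * (r ! * s !) := by positivity
  apply Nat.eq_of_mul_eq_mul_left hpos
  have h1 : (p + q).choose p * (p ! * q !) = (p + q)! := by
    rw [Nat.choose_symm_add, ← mul_assoc]
    exact Nat.add_choose_mul_factorial_mul_factorial p q
  have h2 : (r + s).choose r * (r ! * s !) = (r + s)! := by
    rw [Nat.choose_symm_add, ← mul_assoc]
    exact Nat.add_choose_mul_factorial_mul_factorial r s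
  have h3 : (p + q + (r + s)).choose (p + q) * ((p + q)! * (r + s)!) = (p + q + (r + s))! := by
    rw [Nat.choose_symm_add, ← mul_assoc]
    exact Nat.add_choose_mul_factorial_mul_factorial (p + q) (r + s)
  calc p ! * q ! * (r ! * s !) * Nat.multinomial Finset.univ ![p, q, r, s]
      = (p + q + r + s)! := by rw [← hspec]; ring
    _ = (p + q + (r + s))! := by rw [show p + q + (r + s) = p + q + r + s by ring]
    _ = (p + q + (r + s)).choose (p + q) * ((p + q)! * (r + s)!) := h3.symm
    _ = (p + q + (r + s)).choose (p + q) *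
          (((p + q).choose p * (p ! * q !)) * ((r + s).choose r * (r ! * s !))) := by
        rw [h1, h2]
    _ = p ! * q ! * (r ! * s !) *
          ((p + q + r + s).choose (p + q) * ((p + q).choose p * (r + s).choose r)) := by
        rw [show p + q + (r + s) = p + q + r + s by ring]; ring

lemma sum_choose_sq (u : ℕ) :
    ∑ z ∈ Finset.HasAntidiagonal.antidiagonal u, (u.choose z.1) ^ 2 = Nat.centralBinom u := by
  rw [Nat.centralBinom, two_mul, Nat.add_choose_eq]
  refine Finset.sum_congr rfl fun z hz => ?_
  rw [Finset.HasAntidiagonal.mem_antidiagonal] at hz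
  have h1 : z.1 ≤ u := by omega
  have : u.choose z.2 = u.choose z.1 := by
    rw [show z.2 = u - z.1 by omega, Nat.choose_symm h1]
  rw [this, sq]

lemma reindex3 (n : ℕ) (g : ℕ → ℕ → ℕ → ℤ) :
    (∑ x ∈ Finset.HasAntidiagonal.antidiagonal n, ∑ y ∈ Finset.HasAntidiagonal.antidiagonal x.2, g x.1 y.1 y.2)
    = ∑ x ∈ Finset.HasAntidiagonal.antidiagonal n, ∑ y ∈ Finset.HasAntidiagonal.antidiagonal x.1, g y.1 y.2 x.2 := by
  rw [Finset.sum_sigma', Finset.sum_sigma']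
  refine Finset.sum_nbij' (fun a => ⟨(a.1.1 + a.2.1, a.2.2), (a.1.1, a.2.1)⟩)
    (fun a => ⟨(a.2.1, a.2.2 + a.1.2), (a.2.2, a.1.2)⟩) ?_ ?_ ?_ ?_ ?_
  · rintro ⟨⟨p, t⟩, q, u⟩ ha
    simp only [Finset.mem_sigma, Finset.HasAntidiagonal.mem_antidiagonal] at ha
    obtain ⟨h1, h2⟩ := ha
    simp only [Finset.mem_sigma, Finset.HasAntidiagonal.mem_antidiagonal]
    exact ⟨by omega, trivial⟩
  · rintro ⟨⟨k, u⟩, p, q⟩ ha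
    simp only [Finset.mem_sigma, Finset.HasAntidiagonal.mem_antidiagonal] at ha
    obtain ⟨h1, h2⟩ := ha
    simp only [Finset.mem_sigma, Finset.HasAntidiagonal.mem_antidiagonal]
    exact ⟨by omega, trivial⟩
  · rintro ⟨⟨p, t⟩, q, u⟩ ha
    simp only [Finset.mem_sigma, Finset.HasAntidiagonal.mem_antidiagonal] at ha
    obtain ⟨h1, h2⟩ := ha
    subst h2
    rfl
  · rintro ⟨⟨k, u⟩, p, q⟩ ha
    simp only [Finset.mem_sigma, Finset.HasAntidiagonal.mem_antidiagonal] at ha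
    obtain ⟨h1, h2⟩ := ha
    subst h2
    rfl
  · rintro ⟨⟨p, t⟩, q, u⟩ _
    rfl

lemma fsum (f : ℕ → ℤ)
    (hf : ∀ n : ℕ, f n = ∑ x ∈ Finset.HasAntidiagonal.antidiagonal n, ∑ y ∈ Finset.HasAntidiagonal.antidiagonal x.2,
      ∑ z ∈ Finset.HasAntidiagonal.antidiagonal y.2,
        ((Nat.multinomial Finset.univ ![x.1, y.1, z.1, z.2] : ℤ)) ^ 2) (n : ℕ) :
    f n = ∑ k ∈ Finset.range (n + 1),
      ((n.choose k) ^ 2 * Nat.centralBinom k * Nat.centralBinom (n - k) : ℤ) := by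
  rw [hf]
  have step1 : ∀ x ∈ Finset.HasAntidiagonal.antidiagonal n, ∀ y ∈ Finset.HasAntidiagonal.antidiagonal x.2,
      (∑ z ∈ Finset.HasAntidiagonal.antidiagonal y.2,
        ((Nat.multinomial Finset.univ ![x.1, y.1, z.1, z.2] : ℤ)) ^ 2)
      = (((n.choose (x.1 + y.1))^2 * ((x.1 + y.1).choose x.1)^2 * Nat.centralBinom y.2 : ℕ) : ℤ) := by
    intro x hx y hy
    rw [Finset.HasAntidiagonal.mem_antidiagonal] at hx
    rw [Finset.HasAntidiagonal.mem_antidiagonal] at hy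
    have hc : ∀ z ∈ Finset.HasAntidiagonal.antidiagonal y.2,
        ((Nat.multinomial Finset.univ ![x.1, y.1, z.1, z.2] : ℤ)) ^ 2
        = (((n.choose (x.1 + y.1))^2 * ((x.1 + y.1).choose x.1)^2 * (y.2.choose z.1)^2 : ℕ) : ℤ) := by
      intro z hz
      rw [Finset.HasAntidiagonal.mem_antidiagonal] at hz
      rw [mult4]
      rw [show x.1 + y.1 + z.1 + z.2 = n by omega, show z.1 + z.2 = y.2 from hz]
      push_cast
      ring
    rw [Finset.sum_congr rfl hc]
    rw [← Nat.cast_sum, ← Finset.mul_sum, sum_choose_sq y.2]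
  rw [Finset.sum_congr rfl (fun x hx => Finset.sum_congr rfl (step1 x hx))]
  rw [reindex3 n (fun a b c =>
    (((n.choose (a + b))^2 * ((a + b).choose a)^2 * Nat.centralBinom c : ℕ) : ℤ))]
  have step2 : ∀ x ∈ Finset.HasAntidiagonal.antidiagonal n,
      (∑ y ∈ Finset.HasAntidiagonal.antidiagonal x.1,
        (((n.choose (y.1 + y.2))^2 * ((y.1 + y.2).choose y.1)^2 * Nat.centralBinom x.2 : ℕ) : ℤ))
      = (((n.choose x.1)^2 * Nat.centralBinom x.1 * Nat.centralBinom x.2 : ℕ) : ℤ) := by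
    intro x _
    have h : ∀ y ∈ Finset.HasAntidiagonal.antidiagonal x.1,
        (((n.choose (y.1 + y.2))^2 * ((y.1 + y.2).choose y.1)^2 * Nat.centralBinom x.2 : ℕ) : ℤ)
        = (((n.choose x.1)^2 * Nat.centralBinom x.2 : ℕ) : ℤ) * (((x.1).choose y.1)^2 : ℕ) := by
      intro y hy
      rw [Finset.HasAntidiagonal.mem_antidiagonal] at hy
      rw [hy]
      push_cast
      ring
    rw [Finset.sum_congr rfl h, ← Finset.mul_sum, ← Nat.cast_sum, sum_choose_sq x.1]
    push_cast
    ring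
  rw [Finset.sum_congr rfl step2]
  rw [Finset.Nat.sum_antidiagonal_eq_sum_range_succ
    (f := fun a b => (((n.choose a)^2 * Nat.centralBinom a * Nat.centralBinom b : ℕ) : ℤ))]
  push_cast
  rfl


noncomputable section

def Fq (m k : ℕ) : ℚ :=
  ((m.choose k : ℕ) : ℚ)^2 * ((Nat.centralBinom k : ℕ) : ℚ) * ((Nat.centralBinom (m - k) : ℕ) : ℚ)

def qp (n k : ℚ) : ℚ := -24*n^3 + 20*n^2 + k*(52*n^2 - 30*n) + k^2*(12 - 36*n) + 8*k^3

def Gq (n k : ℕ) : ℚ :=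
  ((k : ℚ))^3 * qp (n : ℚ) (k : ℚ) * Fq n k / (2*((n : ℚ))^2*(2*(n : ℚ) - 2*(k : ℚ) - 1))

lemma fact_ne (a : ℕ) : ((a ! : ℕ) : ℚ) ≠ 0 := by
  exact_mod_cast (Nat.factorial_pos a).ne'

lemma fd1 (a : ℕ) : (((a+1)! : ℕ) : ℚ) = ((a : ℚ)+1) * ((a ! : ℕ) : ℚ) := by
  rw [Nat.factorial_succ]; push_cast; ring

lemma fd2 (a : ℕ) : (((a+2)! : ℕ) : ℚ) = ((a : ℚ)+2) * ((a : ℚ)+1) * ((a ! : ℕ) : ℚ) := by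
  rw [show a+2 = (a+1)+1 by omega, Nat.factorial_succ, Nat.factorial_succ]; push_cast; ring

lemma fd4 (a : ℕ) : (((a+4)! : ℕ) : ℚ)
    = ((a : ℚ)+4)*((a : ℚ)+3)*((a : ℚ)+2)*((a : ℚ)+1) * ((a ! : ℕ) : ℚ) := by
  rw [show a+4 = (a+2)+2 by omega, fd2, fd2]; push_cast; ring

lemma cbq (m : ℕ) : ((Nat.centralBinom m : ℕ) : ℚ) = (((2*m)! : ℕ) : ℚ) / (((m ! : ℕ) : ℚ) * ((m ! : ℕ) : ℚ)) := by
  rw [Nat.centralBinom, Nat.cast_choose ℚ (by omega), show 2*m - m = m by omega]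

lemma chq (k j : ℕ) : (((k+j).choose k : ℕ) : ℚ) = (((k+j)! : ℕ) : ℚ) / (((k ! : ℕ) : ℚ) * ((j ! : ℕ) : ℚ)) := by
  rw [Nat.cast_choose ℚ (by omega : k ≤ k + j), show k + j - k = j by omega]

lemma Fq_eq (k j : ℕ) : Fq (k+j) k
    = (((k+j)! : ℕ) : ℚ)^2 * (((2*k)! : ℕ) : ℚ) * (((2*j)! : ℕ) : ℚ)
      / (((k ! : ℕ) : ℚ)^4 * ((j ! : ℕ) : ℚ)^4) := by
  unfold Fq
  rw [show k + j - k = j by omega, chq, cbq, cbq]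
  field_simp

lemma e1 (k j : ℕ) : Fq (k+j+1) k
    = ((j:ℚ)+2)^3 / (2*((k:ℚ)+(j:ℚ)+2)^2*(2*(j:ℚ)+3)) * Fq (k+j+2) k := by
  rw [show k+j+1 = k+(j+1) by omega, show k+j+2 = k+(j+2) by omega, Fq_eq, Fq_eq]
  rw [show k+(j+1) = (k+j)+1 by omega, show k+(j+2) = (k+j)+2 by omega,
    show 2*(j+1) = 2*j+2 by omega, show 2*(j+2) = 2*j+4 by omega,
    fd1, fd2, fd2, fd4, fd1 j, fd2 j]
  have h1 := fact_ne k
  have h2 := fact_ne j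
  have h3 := fact_ne (k+j)
  have h4 := fact_ne (2*j)
  have hj : (0:ℚ) ≤ (j:ℚ) := Nat.cast_nonneg j
  have hk : (0:ℚ) ≤ (k:ℚ) := Nat.cast_nonneg k
  have n1 : ((j:ℚ)+1) ≠ 0 := by positivity
  have n2 : ((j:ℚ)+2) ≠ 0 := by positivity
  have n3 : ((k:ℚ)+(j:ℚ)+2) ≠ 0 := by positivity
  have n4 : (2*(j:ℚ)+3) ≠ 0 := by positivity
  push_cast
  field_simp
  ring

lemma e2 (k j : ℕ) : Fq (k+j) k
    = (((j:ℚ)+2)^3*((j:ℚ)+1)^3)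
      / (4*((k:ℚ)+(j:ℚ)+2)^2*((k:ℚ)+(j:ℚ)+1)^2*(2*(j:ℚ)+3)*(2*(j:ℚ)+1)) * Fq (k+j+2) k := by
  rw [show k+j+2 = k+(j+2) by omega, Fq_eq, Fq_eq]
  rw [show k+(j+2) = (k+j)+2 by omega, show 2*(j+2) = 2*j+4 by omega, fd2, fd4, fd2 j]
  have h1 := fact_ne k
  have h2 := fact_ne j
  have h3 := fact_ne (k+j)
  have h4 := fact_ne (2*j)
  have hj : (0:ℚ) ≤ (j:ℚ) := Nat.cast_nonneg j
  have hk : (0:ℚ) ≤ (k:ℚ) := Nat.cast_nonneg k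
  have n1 : ((j:ℚ)+1) ≠ 0 := by positivity
  have n2 : ((j:ℚ)+2) ≠ 0 := by positivity
  have n3 : ((k:ℚ)+(j:ℚ)+2) ≠ 0 := by positivity
  have n3' : ((k:ℚ)+(j:ℚ)+1) ≠ 0 := by positivity
  have n4 : (2*(j:ℚ)+3) ≠ 0 := by positivity
  have n5 : (2*(j:ℚ)+1) ≠ 0 := by positivity
  push_cast
  field_simp
  ring

lemma e3 (k j : ℕ) : Fq (k+j+2) (k+1)
    = ((2*(k:ℚ)+1)*((j:ℚ)+2)^3) / ((2*(j:ℚ)+3)*((k:ℚ)+1)^3) * Fq (k+j+2) k := by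
  rw [show k+j+2 = k+(j+2) by omega, Fq_eq]
  rw [show k+(j+2) = (k+1)+(j+1) by omega, Fq_eq]
  rw [show (k+1)+(j+1) = (k+j)+2 by omega,
    show 2*(j+2) = 2*j+4 by omega, show 2*(j+1) = 2*j+2 by omega,
    show 2*(k+1) = 2*k+2 by omega,
    fd2 (k+j), fd4, fd2 (2*j), fd2 (2*k), fd1 j, fd1 k, fd2 j]
  have h1 := fact_ne k
  have h2 := fact_ne j
  have h3 := fact_ne (k+j)
  have h4 := fact_ne (2*j)
  have h5 := fact_ne (2*k)
  have hj : (0:ℚ) ≤ (j:ℚ) := Nat.cast_nonneg j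
  have hk : (0:ℚ) ≤ (k:ℚ) := Nat.cast_nonneg k
  have n1 : ((j:ℚ)+1) ≠ 0 := by positivity
  have n2 : ((j:ℚ)+2) ≠ 0 := by positivity
  have n6 : ((k:ℚ)+1) ≠ 0 := by positivity
  have n4 : (2*(j:ℚ)+3) ≠ 0 := by positivity
  have n5 : (2*(j:ℚ)+1) ≠ 0 := by positivity
  have n7 : (2*(k:ℚ)+1) ≠ 0 := by positivity
  push_cast
  field_simp
  ring

lemma g1 (k j : ℕ) : Gq (k+j+2) k
    = ((k:ℚ)^3 * qp ((k:ℚ)+(j:ℚ)+2) (k:ℚ) / (2*((k:ℚ)+(j:ℚ)+2)^2*(2*(j:ℚ)+3)))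
      * Fq (k+j+2) k := by
  unfold Gq
  push_cast
  have h : 2*((k:ℚ)+(j:ℚ)+2) - 2*(k:ℚ) - 1 = 2*(j:ℚ)+3 := by ring
  rw [h]
  ring

lemma g2 (k j : ℕ) : Gq (k+j+2) (k+1)
    = (((k:ℚ)+1)^3 * qp ((k:ℚ)+(j:ℚ)+2) ((k:ℚ)+1) / (2*((k:ℚ)+(j:ℚ)+2)^2*(2*(j:ℚ)+1)))
      * Fq (k+j+2) (k+1) := by
  unfold Gq
  push_cast
  have h : 2*((k:ℚ)+(j:ℚ)+2) - 2*((k:ℚ)+1) - 1 = 2*(j:ℚ)+1 := by ring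
  rw [h]
  ring

lemma perk_main (k j : ℕ) :
    (((k+j+2 : ℕ) : ℚ))^3 * Fq (k+j+2) k
      - 2*(2*((k+j+2 : ℕ) : ℚ)-1)*(5*((k+j+2 : ℕ) : ℚ)^2-5*((k+j+2 : ℕ) : ℚ)+2) * Fq (k+j+1) k
      + 64*(((k+j+2 : ℕ) : ℚ)-1)^3 * Fq (k+j) k
    = Gq (k+j+2) (k+1) - Gq (k+j+2) k := by
  rw [g1, g2, e1, e2, e3]
  push_cast
  generalize Fq (k+j+2) k = Φ
  simp only [qp]
  have hj : (0:ℚ) ≤ (j:ℚ) := Nat.cast_nonneg j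
  have hk : (0:ℚ) ≤ (k:ℚ) := Nat.cast_nonneg k
  have n1 : ((j:ℚ)+1) ≠ 0 := by positivity
  have n6 : ((k:ℚ)+1) ≠ 0 := by positivity
  have n3 : ((k:ℚ)+(j:ℚ)+2) ≠ 0 := by positivity
  have n3' : ((k:ℚ)+(j:ℚ)+1) ≠ 0 := by positivity
  have n4 : (2*(j:ℚ)+3) ≠ 0 := by positivity
  have n5 : (2*(j:ℚ)+1) ≠ 0 := by positivity
  field_simp
  ring

lemma perk_sub1 (m : ℕ) :
    ((m:ℚ)+2)^3 * Fq (m+2) (m+1)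
      - 2*(2*((m:ℚ)+2)-1)*(5*((m:ℚ)+2)^2-5*((m:ℚ)+2)+2) * Fq (m+1) (m+1)
      + 64*(((m:ℚ)+2)-1)^3 * Fq m (m+1)
    = Gq (m+2) (m+2) - Gq (m+2) (m+1) := by
  have h1 : Fq (m+2) (m+1) = 2 * ((m:ℚ)+2)^2 * ((Nat.centralBinom (m+1) : ℕ) : ℚ) := by
    unfold Fq
    rw [show m+2-(m+1) = 1 by omega, show m+2 = (m+1)+1 by omega, Nat.choose_succ_self_right]
    rw [show Nat.centralBinom 1 = 2 by decide]
    push_cast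
    ring
  have h2 : Fq (m+1) (m+1) = ((Nat.centralBinom (m+1) : ℕ) : ℚ) := by
    unfold Fq
    rw [Nat.choose_self, Nat.sub_self, show Nat.centralBinom 0 = 1 by decide]
    push_cast
    ring
  have h3 : Fq m (m+1) = 0 := by
    unfold Fq
    rw [Nat.choose_eq_zero_of_lt (by omega)]
    push_cast
    ring
  have h4 : Fq (m+2) (m+2) = ((Nat.centralBinom (m+2) : ℕ) : ℚ) := by
    unfold Fq
    rw [Nat.choose_self, Nat.sub_self, show Nat.centralBinom 0 = 1 by decide]
    push_cast
    ring
  have hm2 : ((m:ℚ)+2) ≠ 0 := by positivity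
  have hb : ((Nat.centralBinom (m+2) : ℕ) : ℚ)
      = 2*(2*(m:ℚ)+3) * ((Nat.centralBinom (m+1) : ℕ) : ℚ) / ((m:ℚ)+2) := by
    have h := Nat.succ_mul_centralBinom_succ (m+1)
    have h' := congrArg (fun x : ℕ => (x : ℚ)) h
    rw [show m+1+1 = m+2 by omega] at h'
    push_cast at h'
    field_simp
    linarith [h']
  unfold Gq
  rw [h1, h2, h3, h4, hb]
  simp only [qp]
  push_cast
  have hm2' : (2*((m:ℚ)+2) - 2*((m:ℚ)+1) - 1) = 1 := by ring
  have hm2'' : (2*((m:ℚ)+2) - 2*((m:ℚ)+2) - 1) = -1 := by ring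
  rw [hm2', hm2'']
  field_simp
  ring

lemma perk_top (m : ℕ) :
    ((m:ℚ)+2)^3 * Fq (m+2) (m+2)
      - 2*(2*((m:ℚ)+2)-1)*(5*((m:ℚ)+2)^2-5*((m:ℚ)+2)+2) * Fq (m+1) (m+2)
      + 64*(((m:ℚ)+2)-1)^3 * Fq m (m+2)
    = Gq (m+2) (m+3) - Gq (m+2) (m+2) := by
  have h4 : Fq (m+2) (m+2) = ((Nat.centralBinom (m+2) : ℕ) : ℚ) := by
    unfold Fq
    rw [Nat.choose_self, Nat.sub_self, show Nat.centralBinom 0 = 1 by decide]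
    push_cast
    ring
  have h5 : Fq (m+1) (m+2) = 0 := by
    unfold Fq
    rw [Nat.choose_eq_zero_of_lt (by omega)]
    push_cast
    ring
  have h6 : Fq m (m+2) = 0 := by
    unfold Fq
    rw [Nat.choose_eq_zero_of_lt (by omega)]
    push_cast
    ring
  have h7 : Fq (m+2) (m+3) = 0 := by
    unfold Fq
    rw [Nat.choose_eq_zero_of_lt (by omega)]
    push_cast
    ring
  unfold Gq
  rw [h4, h5, h6, h7]
  simp only [qp]
  push_cast
  have hm2 : ((m:ℚ)+2) ≠ 0 := by positivity
  have hm2'' : (2*((m:ℚ)+2) - 2*((m:ℚ)+2) - 1) = -1 := by ring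
  rw [hm2'']
  field_simp
  ring

lemma perk (m k : ℕ) (hk : k ≤ m + 2) :
    ((m:ℚ)+2)^3 * Fq (m+2) k
      - 2*(2*((m:ℚ)+2)-1)*(5*((m:ℚ)+2)^2-5*((m:ℚ)+2)+2) * Fq (m+1) k
      + 64*(((m:ℚ)+2)-1)^3 * Fq m k
    = Gq (m+2) (k+1) - Gq (m+2) k := by
  rcases Nat.lt_or_ge k (m+1) with h | h
  · obtain ⟨j, hj⟩ : ∃ j, m = k + j := ⟨m - k, by omega⟩
    subst hj
    have := perk_main k j
    push_cast at this ⊢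
    linarith [this]
  · rcases Nat.eq_or_lt_of_le h with h' | h'
    · have hk1 : k = m + 1 := h'.symm
      subst hk1
      have := perk_sub1 m
      rw [show m+1+1 = m+2 by omega]
      exact this
    · have hk2 : k = m + 2 := by omega
      subst hk2
      exact perk_top m

lemma Fq_zero_of_lt {a b : ℕ} (h : a < b) : Fq a b = 0 := by
  unfold Fq
  rw [Nat.choose_eq_zero_of_lt h]
  push_cast
  ring

lemma Gq_zero (n : ℕ) : Gq n 0 = 0 := by
  unfold Gq
  push_cast
  ring

lemma Gq_top (m : ℕ) : Gq (m+2) (m+3) = 0 := by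
  unfold Gq
  rw [Fq_zero_of_lt (by omega)]
  push_cast
  ring

lemma qrec (m : ℕ) :
    ((m:ℚ)+2)^3 * (∑ k ∈ Finset.range (m+3), Fq (m+2) k)
      - 2*(2*((m:ℚ)+2)-1)*(5*((m:ℚ)+2)^2-5*((m:ℚ)+2)+2) * (∑ k ∈ Finset.range (m+3), Fq (m+1) k)
      + 64*(((m:ℚ)+2)-1)^3 * (∑ k ∈ Finset.range (m+3), Fq m k) = 0 := by
  rw [Finset.mul_sum, Finset.mul_sum, Finset.mul_sum, ← Finset.sum_sub_distrib,
    ← Finset.sum_add_distrib]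
  have h1 : ∀ k ∈ Finset.range (m+3),
      ((m:ℚ)+2)^3 * Fq (m+2) k
        - 2*(2*((m:ℚ)+2)-1)*(5*((m:ℚ)+2)^2-5*((m:ℚ)+2)+2) * Fq (m+1) k
        + 64*(((m:ℚ)+2)-1)^3 * Fq m k
      = Gq (m+2) (k+1) - Gq (m+2) k := by
    intro k hk
    rw [Finset.mem_range] at hk
    exact perk m k (by omega)
  rw [Finset.sum_congr rfl h1, Finset.sum_range_sub (Gq (m+2)) (m+3), Gq_top, Gq_zero]
  ring


theorem recurrence_N4_ones (f : ℕ → ℤ)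
    (hf : ∀ n : ℕ, f n = ∑ x ∈ Finset.HasAntidiagonal.antidiagonal n, ∑ y ∈ Finset.HasAntidiagonal.antidiagonal x.2,
      ∑ z ∈ Finset.HasAntidiagonal.antidiagonal y.2,
        ((Nat.multinomial Finset.univ ![x.1, y.1, z.1, z.2] : ℤ)) ^ 2) :
    ∀ n : ℕ, 2 ≤ n →
      (n : ℤ) ^ 3 * f n - 2 * (2 * (n : ℤ) - 1) * (5 * (n : ℤ) ^ 2 - 5 * (n : ℤ) + 2) * f (n - 1)
        + 64 * ((n : ℤ) - 1) ^ 3 * f (n - 2) = 0 := by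
  intro n hn
  obtain ⟨m, rfl⟩ : ∃ m, n = m + 2 := ⟨n - 2, by omega⟩
  rw [show m + 2 - 1 = m + 1 by omega, show m + 2 - 2 = m by omega]
  have cast_eq : ∀ N : ℕ, ((f N : ℤ) : ℚ) = ∑ k ∈ Finset.range (N+1), Fq N k := by
    intro N
    rw [fsum f hf N]
    push_cast
    refine Finset.sum_congr rfl fun k _ => ?_
    simp only [Fq]
  have h0 : ((f (m+2) : ℤ) : ℚ) = ∑ k ∈ Finset.range (m+3), Fq (m+2) k := by
    have := cast_eq (m+2)
    rw [show m+2+1 = m+3 by omega] at this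
    exact this
  have h1 : ((f (m+1) : ℤ) : ℚ) = ∑ k ∈ Finset.range (m+3), Fq (m+1) k := by
    have e1 : ∑ k ∈ Finset.range (m+2+1), Fq (m+1) k
        = ∑ k ∈ Finset.range (m+2), Fq (m+1) k + Fq (m+1) (m+2) := Finset.sum_range_succ _ _
    have := cast_eq (m+1)
    rw [show m+1+1 = m+2 by omega] at this
    rw [show m+3 = m+2+1 by omega, e1, Fq_zero_of_lt (show m+1 < m+2 by omega), add_zero]
    exact this
  have h2 : ((f m : ℤ) : ℚ) = ∑ k ∈ Finset.range (m+3), Fq m k := by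
    have e1 : ∑ k ∈ Finset.range (m+2+1), Fq m k
        = ∑ k ∈ Finset.range (m+2), Fq m k + Fq m (m+2) := Finset.sum_range_succ _ _
    have e2 : ∑ k ∈ Finset.range (m+1+1), Fq m k
        = ∑ k ∈ Finset.range (m+1), Fq m k + Fq m (m+1) := Finset.sum_range_succ _ _
    have := cast_eq m
    rw [show m+3 = m+2+1 by omega, e1, Fq_zero_of_lt (show m < m+2 by omega), add_zero,
      show m+2 = m+1+1 by omega, e2, Fq_zero_of_lt (show m < m+1 by omega), add_zero]
    exact this
  have key : ((m:ℚ)+2)^3 * ((f (m+2) : ℤ) : ℚ)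
      - 2*(2*((m:ℚ)+2)-1)*(5*((m:ℚ)+2)^2-5*((m:ℚ)+2)+2) * ((f (m+1) : ℤ) : ℚ)
      + 64*(((m:ℚ)+2)-1)^3 * ((f m : ℤ) : ℚ) = 0 := by
    rw [h0, h1, h2]
    exact qrec m
  have final : ((((m+2 : ℕ) : ℤ)^3 * f (m+2)
      - 2*(2*((m+2 : ℕ) : ℤ)-1)*(5*((m+2 : ℕ) : ℤ)^2-5*((m+2 : ℕ) : ℤ)+2) * f (m+1)
      + 64*(((m+2 : ℕ) : ℤ)-1)^3 * f m : ℤ) : ℚ) = ((0 : ℤ) : ℚ) := by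
    push_cast
    push_cast at key
    linear_combination key
  exact_mod_cast final
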